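/- Latent projection is monotone: if H is a subgraph of the mDAG G (same vertex set, with edges and bidirected faces of H contained in those of G), then for any subset W of vertices, p(H, W) is a subgraph of p(G, W). -/

import Mathlib

/-- An mDAG: an acyclic directed graph together with an abstract simplicial complex of
bidirected faces (all faces nonempty, all singletons present, closed under nonempty subsets). -/
structure MDAG (W : Type) where
  Edge : W → W → Prop
  Faces : Set (Set W)
  acyclic : ∀ w, ¬ Relation.TransGen Edge w w
  singleton_mem : ∀ w : W, {w} ∈ Faces
  nonempty_of_mem : ∀ B ∈ Faces, B.Nonempty
  down_closed : ∀ A B : Set W, A ⊆ B → A.Nonempty → B ∈ Faces → A ∈ Faces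

/-- `projEdge Edge U a b`: there is a directed path from `a` to `b` (of length ≥ 1) with all
non-endpoint vertices in `U`.  This is the directed-edge relation of the latent projection
that projects out `U`. -/
def projEdge {W : Type} (Edge : W → W → Prop) (U : Set W) (a b : W) : Prop :=
  ∃ c, Relation.ReflTransGen (fun x y => Edge x y ∧ y ∈ U) a c ∧ Edge c b

/-- `hcc Edge Faces U S`: the vertices of `S` share a hidden common cause with respect to `U`:
there is a bidirected face `B ⊆ U ∪ S` such that every `w ∈ S` is reached from some `b ∈ B`
by a directed path all of whose vertices lie in `U ∪ {w}`. -/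
def hcc {W : Type} (Edge : W → W → Prop) (Faces : Set (Set W)) (U : Set W) (S : Set W) : Prop :=
  ∃ B ∈ Faces, B ⊆ U ∪ S ∧
    ∀ w ∈ S, ∃ b ∈ B, Relation.ReflTransGen (fun x y => Edge x y ∧ x ∈ U) b w

/-- Latent projection is monotone: if `H` is a subgraph of the mDAG `G` (same vertices,
edges and bidirected faces of `H` contained in those of `G`) then, projecting out any set
`U` of vertices, every directed edge of `p(H, Uᶜ)` is a directed edge of `p(G, Uᶜ)` and
every bidirected face of `p(H, Uᶜ)` is a bidirected face of `p(G, Uᶜ)`. -/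
theorem stmt11 {W : Type} [Fintype W] (G H : MDAG W) (U : Set W)
    (hE : ∀ a b, H.Edge a b → G.Edge a b) (hF : H.Faces ⊆ G.Faces) :
    (∀ a b, projEdge H.Edge U a b → projEdge G.Edge U a b) ∧
    (∀ S : Set W, hcc H.Edge H.Faces U S → hcc G.Edge G.Faces U S) := by
  constructor
  · rintro a b ⟨c, hpath, hedge⟩
    exact ⟨c, Relation.ReflTransGen.mono (fun x y ⟨h1, h2⟩ => ⟨hE x y h1, h2⟩) a c hpath, hE c b hedge⟩
  · rintro S ⟨B, hB, hBU, hreach⟩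
    refine ⟨B, hF hB, hBU, fun w hw => ?_⟩
    obtain ⟨b, hb, hp⟩ := hreach w hw
    exact ⟨b, hb, Relation.ReflTransGen.mono (fun x y ⟨h1, h2⟩ => ⟨hE x y h1, h2⟩) b w hp⟩
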